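/- Consider a natural assignment (no metadata, k = 0) can : Q → (Fin m → Option U) for the state space Q of a dictionary holding at most n ≥ 2 elements from a universe U with m < |U| cells. Then there exists an element v ∈ U such that for every cell ℓ there are states q, q' with v ∈ q, v ∉ q', and can(q)[ℓ] = can(q')[ℓ] (Property 1 of the lower bound). -/

import Mathlib

theorem stmt7 (U : Type*) [Fintype U] [DecidableEq U] (n m : ℕ)
    (hn : 2 ≤ n) (hm : m < Fintype.card U)
    (can : {q : Finset U // q.card ≤ n} → Fin m → Option U)
    -- naturality: each cell is ⊥ or an element of the state
    (hnat1 : ∀ q ℓ a, can q ℓ = some a → a ∈ q.1)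
    -- naturality: each element of the state appears in some cell
    (hnat2 : ∀ q, ∀ a ∈ q.1, ∃ ℓ, can q ℓ = some a) :
    ∃ v : U, ∀ ℓ : Fin m, ∃ q q' : {q : Finset U // q.card ≤ n},
      v ∈ q.1 ∧ v ∉ q'.1 ∧ can q ℓ = can q' ℓ := by
  classical
  by_contra hcon
  push_neg at hcon
  choose f hf using hcon
  -- the empty state
  have hemp0 : (∅ : Finset U).card ≤ n := by simp
  have hemp : ∀ ℓ, can ⟨∅, hemp0⟩ ℓ = none := by
    intro ℓ
    cases h : can ⟨∅, hemp0⟩ ℓ with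
    | none => rfl
    | some a => exact absurd (hnat1 _ _ _ h) (by simp)
  have hsc : ∀ v : U, ({v} : Finset U).card ≤ n := by
    intro v; simp; omega
  have hsing : ∀ v : U, can ⟨{v}, hsc v⟩ (f v) = some v := by
    intro v
    cases h : can ⟨{v}, hsc v⟩ (f v) with
    | none =>
        exact absurd (h.trans (hemp (f v)).symm)
          (hf v ⟨{v}, hsc v⟩ ⟨∅, hemp0⟩ (by simp) (by simp))
    | some a =>
        have := hnat1 _ _ _ h
        simp at this; rw [this]
  have hinj : Function.Injective f := by
    intro v w hvw
    by_contra hne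
    have hcard : ({v, w} : Finset U).card ≤ n := by
      calc ({v, w} : Finset U).card ≤ ({w} : Finset U).card + 1 :=
            Finset.card_insert_le _ _
        _ ≤ n := by simp; omega
    set q : {q : Finset U // q.card ≤ n} := ⟨{v, w}, hcard⟩ with hq
    have h1 : can q (f v) ≠ some w := by
      have := hf v q ⟨{w}, hsc w⟩ (by simp [hq]) (by simp [hne])
      have hw : can ⟨{w}, hsc w⟩ (f v) = some w := by rw [hvw]; exact hsing w
      rw [hw] at this; exact this
    have h2 : can q (f v) ≠ some v := by
      have := hf w q ⟨{v}, hsc v⟩ (by simp [hq]) (by simp [Ne.symm hne])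
      rw [← hvw] at this
      rw [hsing v] at this; exact this
    have h3 : can q (f v) ≠ none := by
      have := hf v q ⟨∅, hemp0⟩ (by simp [hq]) (by simp)
      rw [hemp (f v)] at this; exact this
    cases h : can q (f v) with
    | none => exact h3 h
    | some a =>
        have := hnat1 _ _ _ h
        simp [hq] at this
        rcases this with rfl | rfl
        · exact h2 h
        · exact h1 h
  have := Fintype.card_le_of_injective f hinj
  simp at this
  omega
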